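/- Let 𝒜 = (A₁, A₂, δ, ▷) and 𝒢 = (G, E, ∂, ▷') be reduced crossed modules, let f = (f₁, f₂) : 𝒜 → 𝒢 be a morphism of reduced crossed modules, and let (X, H₁) be an f-homotopy, so X ∈ G and H₁ : A₁ → E is an f₁-derivation. Define g₁ : A₁ → G and g₂ : A₂ → E by g₁(a) = X⁻¹·f₁(a)·∂(H₁(a))·X and g₂(e) = X⁻¹ ▷' (f₂(e)·H₁(δ(e))). Then g = (g₁, g₂) is a morphism of reduced crossed modules from 𝒜 to 𝒢; that is: g₁ is a group homomorphism, g₂ is a group homomorphism, ∂ ∘ g₂ = g₁ ∘ δ, and g₂(a ▷ e) = g₁(a) ▷' g₂(e) for all a ∈ A₁ and e ∈ A₂. (This is the target t(H) of the homotopy H.) -/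

import Mathlib

/-- Let `𝒜 = (A₁, A₂, δA, ▷)` and `𝒢 = (G, E, δG, ▷')` be reduced crossed
modules, `f = (f₁, f₂) : 𝒜 → 𝒢` a morphism of reduced crossed modules, and
`(X, H₁)` an `f`-homotopy (`X ∈ G`, `H₁ : A₁ → E` an `f₁`-derivation).
Define `g₁(a) = X⁻¹·f₁(a)·δG(H₁(a))·X` and `g₂(e) = X⁻¹ ▷' (f₂(e)·H₁(δA(e)))`.
Then `g = (g₁, g₂)` is a morphism of reduced crossed modules: `g₁` and `g₂`
are group homomorphisms, `δG ∘ g₂ = g₁ ∘ δA`, and `g₂(a ▷ e) = g₁(a) ▷' g₂(e)`.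
(This is the target `t(H)` of the homotopy `H`.) -/
theorem crossedModule_homotopy_target {A₁ A₂ G E : Type*}
    [Group A₁] [Group A₂] [Group G] [Group E]
    [MulDistribMulAction A₁ A₂] [MulDistribMulAction G E]
    (δA : A₂ →* A₁)
    (CM1A : ∀ (a : A₁) (e : A₂), δA (a • e) = a * δA e * a⁻¹)
    (CM2A : ∀ e f : A₂, (δA e) • f = e * f * e⁻¹)
    (δG : E →* G)
    (CM1G : ∀ (X : G) (e : E), δG (X • e) = X * δG e * X⁻¹)
    (CM2G : ∀ e f : E, (δG e) • f = e * f * e⁻¹)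
    (f₁ : A₁ →* G) (f₂ : A₂ →* E)
    (hcomp : ∀ e : A₂, δG (f₂ e) = f₁ (δA e))
    (hact : ∀ (a : A₁) (e : A₂), f₂ (a • e) = f₁ a • f₂ e)
    (X : G) (H₁ : A₁ → E)
    (hder : ∀ a b : A₁, H₁ (a * b) = ((f₁ b)⁻¹ • H₁ a) * H₁ b) :
    (∀ a b : A₁,
      X⁻¹ * f₁ (a * b) * δG (H₁ (a * b)) * X =
        (X⁻¹ * f₁ a * δG (H₁ a) * X) * (X⁻¹ * f₁ b * δG (H₁ b) * X)) ∧
    (∀ e e' : A₂,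
      X⁻¹ • (f₂ (e * e') * H₁ (δA (e * e'))) =
        (X⁻¹ • (f₂ e * H₁ (δA e))) * (X⁻¹ • (f₂ e' * H₁ (δA e')))) ∧
    (∀ e : A₂,
      δG (X⁻¹ • (f₂ e * H₁ (δA e))) = X⁻¹ * f₁ (δA e) * δG (H₁ (δA e)) * X) ∧
    (∀ (a : A₁) (e : A₂),
      X⁻¹ • (f₂ (a • e) * H₁ (δA (a • e))) =
        (X⁻¹ * f₁ a * δG (H₁ a) * X) • (X⁻¹ • (f₂ e * H₁ (δA e)))) := by

  have hsinv : ∀ x y : E, (δG x)⁻¹ • y = x⁻¹ * y * x := by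
    intro x y
    rw [← map_inv, CM2G, inv_inv]
  have h1 : H₁ 1 = 1 := by
    have := hder 1 1
    simp only [mul_one, map_one, inv_one, one_smul] at this
    exact mul_eq_left.mp this.symm
  have hinv : ∀ a : A₁, H₁ a⁻¹ = (f₁ a • H₁ a)⁻¹ := by
    intro a
    have := hder a a⁻¹
    rw [mul_inv_cancel, h1, map_inv, inv_inv] at this
    exact eq_inv_of_mul_eq_one_right this.symm
  refine ⟨?_, ?_, ?_, ?_⟩
  · intro a b
    rw [hder, map_mul, map_mul, CM1G]
    group
  · intro e e'
    rw [← smul_mul', map_mul, map_mul, hder, ← hcomp, hsinv]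
    congr 1
    group
  · intro e
    rw [CM1G, map_mul, hcomp, inv_inv]
    group
  · intro a e
    rw [smul_smul]
    have key : f₂ (a • e) * H₁ (δA (a • e)) =
        (f₁ a * δG (H₁ a)) • (f₂ e * H₁ (δA e)) := by
      rw [CM1A, hact]
      have h2 : H₁ (a * δA e * a⁻¹) =
          (f₁ a • ((f₂ e)⁻¹ * H₁ a * f₂ e * H₁ (δA e))) * (f₁ a • (H₁ a)⁻¹) := by
        rw [hder (a * δA e) a⁻¹, hder a (δA e), hinv, map_inv, inv_inv, ← smul_inv']
        rw [← hcomp, hsinv]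
      rw [h2, ← smul_smul, CM2G, smul_mul', ← mul_assoc, ← smul_mul',
        ← smul_mul', ← smul_mul']
      congr 1
      group
    calc (X⁻¹ : G) • (f₂ (a • e) * H₁ (δA (a • e)))
        = X⁻¹ • ((f₁ a * δG (H₁ a)) • (f₂ e * H₁ (δA e))) := by rw [key]
      _ = _ := by rw [smul_smul]; congr 1; group
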